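/- arXiv:0810.1319 — 5 statements merged into one kernel-verified Lean document; each statement's English description precedes it below -/
import Mathlib

section
/- Let h_e be exponentially distributed with rate 1, let P > 0 and R₀ ≥ 0. Then 𝔼[(R₀ − log₂(1 + h_e P))⁺] = R₀ − (e^{1/P} / ln 2) · ( E₁(1/P) − E₁(2^{R₀}/P) ), where (x)⁺ = max(x, 0). -/
open MeasureTheory ProbabilityTheory Real

private lemma E1_integrable' (a : ℝ) (ha : 0 < a) :
    IntegrableOn (fun s => Real.exp (-s) / s) (Set.Ioi a) := by
  have h1 : IntegrableOn (fun s => Real.exp (-1 * s) / a) (Set.Ioi a) :=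
    (exp_neg_integrableOn_Ioi a one_pos).div_const a
  refine h1.mono' ?_ ?_
  · apply AEStronglyMeasurable.restrict
    exact ((Real.measurable_exp.comp measurable_neg).div measurable_id).aestronglyMeasurable
  · filter_upwards [ae_restrict_mem measurableSet_Ioi] with s hs
    have hs' : a < s := hs
    have h0 : 0 < s := ha.trans hs'
    rw [Real.norm_eq_abs, abs_div, abs_of_pos (Real.exp_pos _), abs_of_pos h0, neg_one_mul]
    gcongr

private lemma E1_diff' (a b : ℝ) (ha : 0 < a) (hab : a ≤ b) :
    (∫ s in Set.Ioi a, Real.exp (-s) / s) - (∫ s in Set.Ioi b, Real.exp (-s) / s)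
      = ∫ s in a..b, Real.exp (-s) / s := by
  have hia := E1_integrable' a ha
  have hib := E1_integrable' b (ha.trans_le hab)
  have hsplit : (∫ s in Set.Ioi a, Real.exp (-s) / s)
      = (∫ s in Set.Ioc a b, Real.exp (-s) / s) + ∫ s in Set.Ioi b, Real.exp (-s) / s := by
    rw [← setIntegral_union (Set.Ioc_disjoint_Ioi le_rfl) measurableSet_Ioi
      (hia.mono_set Set.Ioc_subset_Ioi_self) hib, Set.Ioc_union_Ioi_eq_Ioi hab]
  rw [hsplit, intervalIntegral.integral_of_le hab]
  ring

private lemma subst_lemma' (P R₀ : ℝ) (hP : 0 < P) :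
    ∫ t in (0:ℝ)..R₀, Real.exp (-(((2:ℝ)^(R₀ - t) - 1)/P))
      = (Real.exp (1/P) / Real.log 2) * ∫ s in (1/P)..((2:ℝ)^R₀/P), Real.exp (-s)/s := by
  set f : ℝ → ℝ := fun t => (2:ℝ)^(R₀ - t)/P with hf
  set f' : ℝ → ℝ := fun t => -((2:ℝ)^(R₀ - t) * Real.log 2)/P with hf'
  set g : ℝ → ℝ := fun s => -(Real.exp (1/P) / Real.log 2) * (Real.exp (-s)/s) with hg
  have hAcont : Continuous (fun t : ℝ => (2:ℝ)^(R₀ - t)) := by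
    have : (fun t : ℝ => (2:ℝ)^(R₀ - t)) = fun t => Real.exp (Real.log 2 * (R₀ - t)) :=
      funext fun t => Real.rpow_def_of_pos two_pos _
    rw [this]; fun_prop
  have hderiv : ∀ t ∈ Set.uIcc (0:ℝ) R₀, HasDerivAt f (f' t) t := by
    intro t _
    have h1 : HasDerivAt (fun t : ℝ => R₀ - t) (-1) t := by
      simpa using (hasDerivAt_id t).const_sub R₀
    have h2 : HasDerivAt (fun t : ℝ => (2:ℝ)^(R₀ - t))
        ((2:ℝ)^(R₀ - t) * Real.log 2 * (-1)) t :=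
      (Real.hasStrictDerivAt_const_rpow two_pos (R₀ - t)).hasDerivAt.comp t h1
    have := h2.div_const P
    simpa [hf, hf', mul_comm, neg_div] using this
  have hcont : ContinuousOn f' (Set.uIcc (0:ℝ) R₀) :=
    (((hAcont.mul continuous_const).neg).div_const P).continuousOn
  have himg : ∀ s ∈ f '' Set.uIcc (0:ℝ) R₀, s ≠ 0 := by
    rintro s ⟨t, _, rfl⟩
    exact (div_pos (Real.rpow_pos_of_pos two_pos _) hP).ne'
  have hgcont : ContinuousOn g (f '' Set.uIcc (0:ℝ) R₀) := by
    apply ContinuousOn.mul continuousOn_const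
    exact ContinuousOn.div (Real.continuous_exp.comp continuous_neg).continuousOn
      continuousOn_id himg
  have key := intervalIntegral.integral_comp_smul_deriv' hderiv hcont hgcont
  have hlog2 : Real.log 2 ≠ 0 := by
    simpa using Real.log_ne_zero_of_pos_of_ne_one two_pos (by norm_num)
  have hint : ∀ t, f' t • (g ∘ f) t = Real.exp (-(((2:ℝ)^(R₀ - t) - 1)/P)) := by
    intro t
    have hA : (0:ℝ) < (2:ℝ)^(R₀ - t) := Real.rpow_pos_of_pos two_pos _
    simp only [hf, hf', hg, smul_eq_mul, Function.comp]
    rw [show -(((2:ℝ)^(R₀ - t) - 1)/P) = 1/P + -((2:ℝ)^(R₀ - t)/P) by ring, Real.exp_add]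
    field_simp
  have hf0 : f 0 = (2:ℝ)^R₀/P := by simp [hf]
  have hfR : f R₀ = 1/P := by simp [hf]
  calc ∫ t in (0:ℝ)..R₀, Real.exp (-(((2:ℝ)^(R₀ - t) - 1)/P))
      = ∫ t in (0:ℝ)..R₀, f' t • (g ∘ f) t :=
        intervalIntegral.integral_congr fun t _ => (hint t).symm
    _ = ∫ s in ((2:ℝ)^R₀/P)..(1/P), g s := by rw [key, hf0, hfR]
    _ = -∫ s in (1/P)..((2:ℝ)^R₀/P), g s := by rw [intervalIntegral.integral_symm]
    _ = (Real.exp (1/P) / Real.log 2) * ∫ s in (1/P)..((2:ℝ)^R₀/P), Real.exp (-s)/s := by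
        rw [hg, intervalIntegral.integral_const_mul]
        ring

/-- With unit-rate exponential fading `h_e`, power `P > 0` and rate `R₀ ≥ 0`,
`𝔼[(R₀ - log₂(1 + h_e P))⁺] = R₀ - (e^{1/P} / ln 2) · (E₁(1/P) - E₁(2^{R₀}/P))`,
where `E₁(x) = ∫ₓ^∞ e^{-t}/t dt` is the exponential integral. -/
theorem stmt_7 {Ω : Type*} [MeasureSpace Ω] [IsProbabilityMeasure (ℙ : Measure Ω)]
    (he : Ω → ℝ) (hmeas : Measurable he)
    (hexp : ∀ x : ℝ, 0 ≤ x → ℙ {ω | he ω > x} = ENNReal.ofReal (Real.exp (-x)))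
    (P R₀ : ℝ) (hP : 0 < P) (hR₀ : 0 ≤ R₀) :
    ∫ ω, max (R₀ - Real.logb 2 (1 + he ω * P)) 0 ∂ℙ
      = R₀ - (Real.exp (1 / P) / Real.log 2) *
          ((∫ s in Set.Ioi (1 / P), Real.exp (-s) / s)
            - ∫ s in Set.Ioi ((2 : ℝ) ^ R₀ / P), Real.exp (-s) / s) := by
  set f : Ω → ℝ := fun ω => max (R₀ - Real.logb 2 (1 + he ω * P)) 0 with hfdef
  have hae : ∀ᵐ ω ∂ℙ, 0 < he ω := by
    have h0 := hexp 0 le_rfl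
    rw [neg_zero, Real.exp_zero, ENNReal.ofReal_one] at h0
    have hms : MeasurableSet {ω | (0:ℝ) < he ω} := measurableSet_lt measurable_const hmeas
    have hc : ℙ {ω | ¬ (0 < he ω)} = 0 := by
      have : {ω | ¬ (0 < he ω)} = {ω | (0:ℝ) < he ω}ᶜ := rfl
      rw [this, measure_compl hms (measure_ne_top _ _), h0, measure_univ, tsub_self]
    exact hc
  have hm1 : Measurable fun ω => Real.logb 2 (1 + he ω * P) := by
    simp only [Real.logb]
    exact (Real.measurable_log.comp ((hmeas.mul_const P).const_add 1)).div_const _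
  have hmf : Measurable f := (measurable_const.sub hm1).max measurable_const
  have f_nn : 0 ≤ᵐ[ℙ] f := Filter.Eventually.of_forall fun ω => le_max_right _ _
  have f_bdd : f ≤ᵐ[ℙ] (fun _ => R₀) := by
    filter_upwards [hae] with ω hω
    have h1 : (1:ℝ) ≤ 1 + he ω * P := by nlinarith
    have : 0 ≤ Real.logb 2 (1 + he ω * P) := Real.logb_nonneg one_lt_two h1
    exact max_le (by linarith) hR₀
  have f_int : Integrable f ℙ := by
    refine (integrable_const R₀).mono' hmf.aestronglyMeasurable ?_
    filter_upwards [f_bdd] with ω hω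
    rw [Real.norm_of_nonneg (le_max_right _ _)]
    exact hω
  rw [f_int.integral_eq_integral_Ioc_meas_le f_nn f_bdd]
  have hptw : ∀ t ∈ Set.Ioc (0:ℝ) R₀,
      (ℙ {a | t ≤ f a}).toReal = 1 - Real.exp (-(((2:ℝ)^(R₀ - t) - 1)/P)) := by
    intro t ht
    set c := ((2:ℝ)^(R₀ - t) - 1)/P with hc
    have hA1 : (1:ℝ) ≤ (2:ℝ)^(R₀ - t) := by
      have := Real.rpow_le_rpow_of_exponent_le one_le_two (sub_nonneg.2 ht.2)
      simpa using this
    have hc0 : 0 ≤ c := div_nonneg (by linarith) hP.le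
    have hsets : {a | t ≤ f a} =ᵐ[ℙ] {a | he a ≤ c} := by
      rw [Filter.eventuallyEq_set]
      filter_upwards [hae] with ω hω
      simp only [Set.mem_setOf_eq, hfdef]
      have hx : (0:ℝ) < 1 + he ω * P := by nlinarith
      have key : t ≤ R₀ - Real.logb 2 (1 + he ω * P) ↔ he ω ≤ c := by
        have h1 : t ≤ R₀ - Real.logb 2 (1 + he ω * P)
            ↔ Real.logb 2 (1 + he ω * P) ≤ R₀ - t := by constructor <;> intro <;> linarith
        rw [h1, Real.logb_le_iff_le_rpow one_lt_two hx, hc, le_div_iff₀ hP]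
        constructor <;> intro <;> linarith
      rw [le_max_iff, key]
      constructor
      · rintro (h | h)
        · exact h
        · linarith [ht.1]
      · intro h; left; exact h
    rw [measure_congr hsets]
    have hcompl : {a | he a ≤ c} = {a | c < he a}ᶜ := by ext a; simp [not_lt]
    rw [hcompl, measure_compl (measurableSet_lt measurable_const hmeas) (measure_ne_top _ _),
      measure_univ, hexp c hc0]
    rw [← ENNReal.ofReal_one, ← ENNReal.ofReal_sub _ (Real.exp_pos _).le,
      ENNReal.toReal_ofReal (by nlinarith [Real.exp_zero, Real.exp_le_exp.mpr (neg_nonpos.2 hc0)])]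
  simp only [measureReal_def]
  rw [setIntegral_congr_fun measurableSet_Ioc hptw, ← intervalIntegral.integral_of_le hR₀]
  have hcontc : Continuous fun t : ℝ => Real.exp (-(((2:ℝ)^(R₀ - t) - 1)/P)) := by
    have h1 : (fun t : ℝ => (2:ℝ)^(R₀ - t)) = fun t => Real.exp (Real.log 2 * (R₀ - t)) :=
      funext fun t => Real.rpow_def_of_pos two_pos _
    have : (fun t : ℝ => Real.exp (-(((2:ℝ)^(R₀ - t) - 1)/P)))
        = fun t => Real.exp (-((Real.exp (Real.log 2 * (R₀ - t)) - 1)/P)) :=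
      funext fun t => by rw [Real.rpow_def_of_pos two_pos]
    rw [this]; fun_prop
  rw [intervalIntegral.integral_sub intervalIntegrable_const (hcontc.intervalIntegrable _ _),
    intervalIntegral.integral_const, subst_lemma' P R₀ hP]
  have hb1 : (1:ℝ) ≤ (2:ℝ)^R₀ := by
    have := Real.rpow_le_rpow_of_exponent_le one_le_two hR₀
    simpa using this
  have hab : 1/P ≤ (2:ℝ)^R₀/P := by gcongr
  rw [← E1_diff' (1/P) ((2:ℝ)^R₀/P) (by positivity) hab]
  simp [smul_eq_mul]
end

section
/- Let h_b and h_e be independent, each exponentially distributed with rate 1 (the symmetric Rayleigh scenario with equal unit average SNRs), and let P > 0, R₀ ≥ 0. Then the secrecy-rate objective of Theorem 1 evaluates to Pr(R₀ ≤ log₂(1 + h_b P)) · 𝔼[(R₀ − log₂(1 + h_e P))⁺] = exp(−(2^{R₀} − 1)/P) · { R₀ − (e^{1/P}/ln 2)·( E₁(1/P) − E₁(2^{R₀}/P) ) }. -/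
open MeasureTheory ProbabilityTheory Real Filter Topology

section Helpers

variable {Ω : Type*} [MeasureSpace Ω] [IsProbabilityMeasure (ℙ : Measure Ω)]

/-- Closed tail of a unit-rate exponential. -/
lemma exp_tail_ge (h : Ω → ℝ)
    (hexp : ∀ x : ℝ, 0 ≤ x → ℙ {ω | h ω > x} = ENNReal.ofReal (Real.exp (-x)))
    {c : ℝ} (hc : 0 ≤ c) :
    ℙ {ω | c ≤ h ω} = ENNReal.ofReal (Real.exp (-c)) := by
  refine le_antisymm ?_ ?_
  · rcases eq_or_lt_of_le hc with h0 | h0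
    · subst h0
      simpa using (prob_le_one (μ := (ℙ : Measure Ω)) (s := {ω | (0:ℝ) ≤ h ω}))
    · -- take limit along x → c from the left
      have hne : (𝓝[<] c).NeBot := nhdsLT_neBot c
      have htend : Filter.Tendsto (fun x : ℝ => ENNReal.ofReal (Real.exp (-x))) (𝓝[<] c)
          (𝓝 (ENNReal.ofReal (Real.exp (-c)))) := by
        have : Continuous (fun x : ℝ => ENNReal.ofReal (Real.exp (-x))) := by
          exact ENNReal.continuous_ofReal.comp (Real.continuous_exp.comp continuous_neg)
        exact (this.tendsto c).mono_left nhdsWithin_le_nhds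
      refine ge_of_tendsto htend ?_
      have hmem : Set.Ioo 0 c ∈ 𝓝[<] c := Ioo_mem_nhdsLT h0
      filter_upwards [hmem] with x hx
      rw [← hexp x hx.1.le]
      exact measure_mono fun ω hω => lt_of_lt_of_le hx.2 hω
  · rw [← hexp c hc]
    refine measure_mono fun ω hω => ?_
    simp only [Set.mem_setOf_eq, gt_iff_lt] at hω ⊢
    exact hω.le

lemma exp_nonpos_null (h : Ω → ℝ) (hmeas : Measurable h)
    (hexp : ∀ x : ℝ, 0 ≤ x → ℙ {ω | h ω > x} = ENNReal.ofReal (Real.exp (-x))) :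
    ℙ {ω | h ω ≤ 0} = 0 := by
  have h1 : ℙ {ω | h ω > 0} = 1 := by
    rw [hexp 0 le_rfl]; simp
  have hset : {ω | h ω ≤ 0} = {ω | h ω > 0}ᶜ := by
    ext ω; simp [not_lt]
  rw [hset, measure_compl (measurableSet_lt measurable_const hmeas) (measure_ne_top _ _), h1]
  simp

/-- Tail intersected with positivity. -/
lemma exp_tail_ge_inter_pos (h : Ω → ℝ)
    (hexp : ∀ x : ℝ, 0 ≤ x → ℙ {ω | h ω > x} = ENNReal.ofReal (Real.exp (-x)))
    {c : ℝ} (hc : 0 ≤ c) :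
    ℙ ({ω | c ≤ h ω} ∩ {ω | 0 < h ω}) = ENNReal.ofReal (Real.exp (-c)) := by
  refine le_antisymm ?_ ?_
  · exact le_trans (measure_mono Set.inter_subset_left) (exp_tail_ge h hexp hc).le
  · rw [← hexp c hc]
    refine measure_mono fun ω hω => ?_
    simp only [Set.mem_setOf_eq, gt_iff_lt] at hω
    exact ⟨hω.le, lt_of_le_of_lt hc hω⟩

end Helpers

/-- In the symmetric Rayleigh scenario (independent unit-rate exponential fading
gains `h_b`, `h_e`), with `P > 0` and `R₀ ≥ 0`, the secrecy-rate objective of Theorem 1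
evaluates to
`Pr(R₀ ≤ log₂(1 + h_b P)) · 𝔼[(R₀ - log₂(1 + h_e P))⁺]
  = exp (-(2^{R₀}-1)/P) · (R₀ - (e^{1/P}/ln 2)(E₁(1/P) - E₁(2^{R₀}/P)))`. -/
theorem stmt_8 {Ω : Type*} [MeasureSpace Ω] [IsProbabilityMeasure (ℙ : Measure Ω)]
    (hb he : Ω → ℝ) (hbmeas : Measurable hb) (hemeas : Measurable he)
    (hindep : IndepFun hb he ℙ)
    (hbexp : ∀ x : ℝ, 0 ≤ x → ℙ {ω | hb ω > x} = ENNReal.ofReal (Real.exp (-x)))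
    (heexp : ∀ x : ℝ, 0 ≤ x → ℙ {ω | he ω > x} = ENNReal.ofReal (Real.exp (-x)))
    (P R₀ : ℝ) (hP : 0 < P) (hR₀ : 0 ≤ R₀) :
    (ℙ {ω | R₀ ≤ Real.logb 2 (1 + hb ω * P)}).toReal
        * ∫ ω, max (R₀ - Real.logb 2 (1 + he ω * P)) 0 ∂ℙ
      = Real.exp (-(((2 : ℝ) ^ R₀ - 1) / P)) *
          (R₀ - (Real.exp (1 / P) / Real.log 2) *
            ((∫ s in Set.Ioi (1 / P), Real.exp (-s) / s)
              - ∫ s in Set.Ioi ((2 : ℝ) ^ R₀ / P), Real.exp (-s) / s)) := by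
  have h2R : ∀ x : ℝ, (1:ℝ) ≤ (2:ℝ) ^ x ∨ True := fun _ => Or.inr trivial
  have hone_le : (1:ℝ) ≤ (2:ℝ) ^ R₀ := by
    calc (1:ℝ) = (2:ℝ) ^ (0:ℝ) := (Real.rpow_zero 2).symm
    _ ≤ (2:ℝ) ^ R₀ := Real.rpow_le_rpow_of_exponent_le one_le_two hR₀
  set c : ℝ := ((2:ℝ) ^ R₀ - 1) / P with hc_def
  have hc : 0 ≤ c := div_nonneg (by linarith) hP.le
  -- Part A : the probability factor
  have partA : ℙ {ω | R₀ ≤ Real.logb 2 (1 + hb ω * P)} = ENNReal.ofReal (Real.exp (-c)) := by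
    have hnull : ℙ {ω | hb ω ≤ 0} = 0 := exp_nonpos_null hb hbmeas hbexp
    have hcompl : {ω : Ω | 0 < hb ω}ᶜ = {ω | hb ω ≤ 0} := by ext ω; simp [not_lt]
    have hAinter : ℙ {ω | R₀ ≤ Real.logb 2 (1 + hb ω * P)}
        = ℙ ({ω | R₀ ≤ Real.logb 2 (1 + hb ω * P)} ∩ {ω | 0 < hb ω}) := by
      rw [measure_inter_conull (by rw [hcompl]; exact hnull)]
    have hseteq : {ω | R₀ ≤ Real.logb 2 (1 + hb ω * P)} ∩ {ω | 0 < hb ω}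
        = {ω | c ≤ hb ω} ∩ {ω | 0 < hb ω} := by
      ext ω
      simp only [Set.mem_inter_iff, Set.mem_setOf_eq, and_congr_left_iff]
      intro hω
      have hpos : (0:ℝ) < 1 + hb ω * P := by nlinarith
      rw [Real.le_logb_iff_rpow_le one_lt_two hpos, hc_def, div_le_iff₀ hP]
      constructor <;> intro h <;> nlinarith
    rw [hAinter, hseteq]
    exact exp_tail_ge_inter_pos hb hbexp hc
  -- Part B : the expectation factor
  set g : Ω → ℝ := fun ω => max (R₀ - Real.logb 2 (1 + he ω * P)) 0 with hg_def
  have hame : ∀ᵐ ω ∂(ℙ : Measure Ω), 0 < he ω := by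
    have hnull : ℙ {ω | he ω ≤ 0} = 0 := exp_nonpos_null he hemeas heexp
    rw [MeasureTheory.ae_iff]
    convert hnull using 2
    ext ω; simp [not_lt]
  have gmeas : Measurable g := by
    have : Measurable fun ω => Real.logb 2 (1 + he ω * P) := by
      simp only [Real.logb]
      exact (Real.measurable_log.comp ((hemeas.mul_const P).const_add 1)).div_const _
    exact (measurable_const.sub this).max measurable_const
  have gnonneg : ∀ ω, 0 ≤ g ω := fun ω => le_max_right _ _
  have gbound : ∀ᵐ ω ∂(ℙ : Measure Ω), ‖g ω‖ ≤ R₀ := by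
    filter_upwards [hame] with ω hω
    have h1 : (1:ℝ) < 1 + he ω * P := by nlinarith
    have hlb : 0 ≤ Real.logb 2 (1 + he ω * P) :=
      Real.logb_nonneg one_lt_two h1.le
    rw [Real.norm_eq_abs, abs_of_nonneg (gnonneg ω)]
    exact max_le (by linarith) hR₀
  have gint : Integrable g ℙ :=
    ⟨gmeas.aestronglyMeasurable, HasFiniteIntegral.of_bounded gbound⟩
  have layer : ∫ ω, g ω ∂ℙ
      = ∫ t in Set.Ioi (0:ℝ), ENNReal.toReal (ℙ {a | t < g a}) :=
    gint.integral_eq_integral_meas_lt (Filter.Eventually.of_forall gnonneg)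
  -- identify the tail probabilities
  have hmeasval : ∀ t ∈ Set.Ioi (0:ℝ),
      ENNReal.toReal (ℙ {a | t < g a})
        = (Set.Ioc 0 R₀).indicator
            (fun t => 1 - Real.exp (-(((2:ℝ) ^ (R₀ - t) - 1) / P))) t := by
    intro t ht
    simp only [Set.mem_Ioi] at ht
    by_cases htR : t ≤ R₀
    · -- 0 < t ≤ R₀
      set ct : ℝ := ((2:ℝ) ^ (R₀ - t) - 1) / P with hct_def
      have h1le : (1:ℝ) ≤ (2:ℝ) ^ (R₀ - t) := by
        calc (1:ℝ) = (2:ℝ) ^ (0:ℝ) := (Real.rpow_zero 2).symm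
        _ ≤ _ := Real.rpow_le_rpow_of_exponent_le one_le_two (by linarith)
      have hct : 0 ≤ ct := div_nonneg (by linarith) hP.le
      have hseteq : {a | t < g a} ∩ {ω | 0 < he ω}
          = ({ω | 0 < he ω} \ ({ω | ct ≤ he ω} ∩ {ω | 0 < he ω})) := by
        ext ω
        simp only [Set.mem_inter_iff, Set.mem_setOf_eq, Set.mem_diff, hg_def, lt_max_iff]
        constructor
        · rintro ⟨hlt | hlt, hω⟩
          · have hpos : (0:ℝ) < 1 + he ω * P := by nlinarith
            have : Real.logb 2 (1 + he ω * P) < R₀ - t := by linarith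
            rw [Real.logb_lt_iff_lt_rpow one_lt_two hpos] at this
            refine ⟨hω, fun hcon => ?_⟩
            have := hcon.1
            rw [hct_def, div_le_iff₀ hP] at this
            nlinarith
          · exact absurd hlt (by linarith)
        · rintro ⟨hω, hnot⟩
          have hlt : he ω < ct := by
            by_contra hge
            exact hnot ⟨le_of_not_gt hge, hω⟩
          have hpos : (0:ℝ) < 1 + he ω * P := by nlinarith
          have hlt2 : 1 + he ω * P < (2:ℝ) ^ (R₀ - t) := by
            rw [hct_def] at hlt
            rw [lt_div_iff₀ hP] at hlt
            nlinarith
          have hlog := (Real.logb_lt_iff_lt_rpow one_lt_two hpos).mpr hlt2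
          exact ⟨Or.inl (by linarith), hω⟩
      have hnull : ℙ {ω | he ω ≤ 0} = 0 := exp_nonpos_null he hemeas heexp
      have hcompl : {ω : Ω | 0 < he ω}ᶜ = {ω | he ω ≤ 0} := by ext ω; simp [not_lt]
      have hA : ℙ {a | t < g a} = ℙ ({a | t < g a} ∩ {ω | 0 < he ω}) := by
        rw [measure_inter_conull (by rw [hcompl]; exact hnull)]
      have hsub : ({ω | ct ≤ he ω} ∩ {ω | 0 < he ω}) ⊆ {ω : Ω | 0 < he ω} :=
        Set.inter_subset_right
      have hmeas_pos : ℙ {ω : Ω | 0 < he ω} = 1 := by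
        have := heexp 0 le_rfl; simpa using this
      have hmeas_tail : ℙ ({ω | ct ≤ he ω} ∩ {ω | 0 < he ω})
          = ENNReal.ofReal (Real.exp (-ct)) := exp_tail_ge_inter_pos he heexp hct
      have hdiff : ℙ ({ω : Ω | 0 < he ω} \ ({ω | ct ≤ he ω} ∩ {ω | 0 < he ω}))
          = 1 - ENNReal.ofReal (Real.exp (-ct)) := by
        rw [measure_diff hsub ?_ (measure_ne_top _ _), hmeas_pos, hmeas_tail]
        · exact ((measurableSet_le measurable_const hemeas).inter
            (measurableSet_lt measurable_const hemeas)).nullMeasurableSet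
      rw [hA, hseteq, hdiff]
      have hexp_le_one : ENNReal.ofReal (Real.exp (-ct)) ≤ 1 := by
        rw [← ENNReal.ofReal_one]
        exact ENNReal.ofReal_le_ofReal (Real.exp_le_one_iff.mpr (by linarith))
      rw [ENNReal.toReal_sub_of_le hexp_le_one ENNReal.one_ne_top]
      rw [Set.indicator_of_mem (Set.mem_Ioc.mpr ⟨ht, htR⟩)]
      simp [ENNReal.toReal_ofReal (Real.exp_nonneg _)]
      exact hct_def
    · -- t > R₀ : probability is zero
      push_neg at htR
      have hsub : {a | t < g a} ⊆ {ω | he ω ≤ 0} := by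
        intro ω hω
        simp only [Set.mem_setOf_eq, hg_def, lt_max_iff] at hω
        by_contra hcon
        simp only [Set.mem_setOf_eq, not_le] at hcon
        have h1 : (1:ℝ) < 1 + he ω * P := by nlinarith
        have hlb : 0 ≤ Real.logb 2 (1 + he ω * P) :=
          Real.logb_nonneg one_lt_two h1.le
        rcases hω with hω | hω
        · linarith
        · linarith
      have : ℙ {a | t < g a} = 0 :=
        le_antisymm (le_trans (measure_mono hsub) (exp_nonpos_null he hemeas heexp).le)
          bot_le
      rw [this, Set.indicator_of_notMem (by simp [Set.mem_Ioc]; intro h; linarith)]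
      simp
  have step1 : ∫ ω, g ω ∂ℙ
      = ∫ t in Set.Ioc 0 R₀, (1 - Real.exp (-(((2:ℝ) ^ (R₀ - t) - 1) / P))) := by
    rw [layer, MeasureTheory.setIntegral_congr_fun measurableSet_Ioi hmeasval,
      MeasureTheory.setIntegral_indicator measurableSet_Ioc,
      Set.inter_eq_self_of_subset_right Set.Ioc_subset_Ioi_self]
  -- continuity facts
  have hcont2 : Continuous fun t : ℝ => (2:ℝ) ^ t :=
    continuous_const.rpow continuous_id (fun x => Or.inl two_ne_zero)
  have hcont_exp : Continuous fun t : ℝ => Real.exp (-(((2:ℝ) ^ (R₀ - t) - 1) / P)) := by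
    fun_prop
  have hcont_exp2 : Continuous fun t : ℝ => Real.exp (-((2:ℝ) ^ (R₀ - t) / P)) := by
    fun_prop
  -- from set integral to interval integral
  have step2 : ∫ t in Set.Ioc 0 R₀, (1 - Real.exp (-(((2:ℝ) ^ (R₀ - t) - 1) / P)))
      = ∫ t in (0:ℝ)..R₀, (1 - Real.exp (-(((2:ℝ) ^ (R₀ - t) - 1) / P))) :=
    (intervalIntegral.integral_of_le hR₀).symm
  have step3 : ∫ t in (0:ℝ)..R₀, (1 - Real.exp (-(((2:ℝ) ^ (R₀ - t) - 1) / P)))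
      = R₀ - ∫ t in (0:ℝ)..R₀, Real.exp (-(((2:ℝ) ^ (R₀ - t) - 1) / P)) := by
    rw [intervalIntegral.integral_sub intervalIntegrable_const
      (hcont_exp.intervalIntegrable 0 R₀)]
    simp
  have step4 : ∫ t in (0:ℝ)..R₀, Real.exp (-(((2:ℝ) ^ (R₀ - t) - 1) / P))
      = Real.exp (1/P) * ∫ t in (0:ℝ)..R₀, Real.exp (-((2:ℝ) ^ (R₀ - t) / P)) := by
    rw [← intervalIntegral.integral_const_mul]
    apply intervalIntegral.integral_congr
    intro t _
    simp only [← Real.exp_add]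
    congr 1
    field_simp
    ring
  have step5 : ∫ t in (0:ℝ)..R₀, Real.exp (-((2:ℝ) ^ (R₀ - t) / P))
      = ∫ u in (0:ℝ)..R₀, Real.exp (-((2:ℝ) ^ u / P)) := by
    have := intervalIntegral.integral_comp_sub_left (a := (0:ℝ)) (b := R₀)
      (fun u => Real.exp (-((2:ℝ) ^ u / P))) R₀
    simpa using this
  -- change of variables
  have hlog2 : Real.log 2 ≠ 0 := by
    have := Real.log_pos one_lt_two; linarith
  have step6 : ∫ u in (0:ℝ)..R₀, Real.exp (-((2:ℝ) ^ u / P))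
      = ∫ s in (1/P)..((2:ℝ) ^ R₀ / P), Real.exp (-s) / (s * Real.log 2) := by
    have hderiv : ∀ x ∈ Set.uIcc (0:ℝ) R₀,
        HasDerivAt (fun u : ℝ => (2:ℝ) ^ u / P) ((2:ℝ) ^ x * Real.log 2 / P) x := by
      intro x _
      exact ((Real.hasStrictDerivAt_const_rpow two_pos x).hasDerivAt).div_const P
    have hcont' : ContinuousOn (fun x : ℝ => (2:ℝ) ^ x * Real.log 2 / P)
        (Set.uIcc (0:ℝ) R₀) := ((hcont2.mul continuous_const).div_const P).continuousOn
    have hgcont : ContinuousOn (fun s : ℝ => Real.exp (-s) / (s * Real.log 2))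
        ((fun u : ℝ => (2:ℝ) ^ u / P) '' Set.uIcc (0:ℝ) R₀) := by
      intro s hs
      obtain ⟨u, _, rfl⟩ := hs
      have hspos : 0 < (2:ℝ) ^ u / P := div_pos (Real.rpow_pos_of_pos two_pos u) hP
      exact (((Real.continuous_exp.comp continuous_neg).continuousAt).div
        ((continuous_id.mul continuous_const).continuousAt)
        (by simpa using (mul_pos hspos (Real.log_pos one_lt_two)).ne')).continuousWithinAt
    have key := intervalIntegral.integral_comp_smul_deriv' hderiv hcont' hgcont
    have heq : ∀ u ∈ Set.uIcc (0:ℝ) R₀, ((2:ℝ) ^ u * Real.log 2 / P) •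
        ((fun s : ℝ => Real.exp (-s) / (s * Real.log 2)) ∘ (fun u : ℝ => (2:ℝ) ^ u / P)) u
        = Real.exp (-((2:ℝ) ^ u / P)) := by
      intro u _
      have h2pos : (0:ℝ) < (2:ℝ) ^ u := Real.rpow_pos_of_pos two_pos u
      simp only [Function.comp_apply, smul_eq_mul]
      field_simp
    rw [← intervalIntegral.integral_congr heq, key]
    norm_num
  have step7 : ∫ s in (1/P)..((2:ℝ) ^ R₀ / P), Real.exp (-s) / (s * Real.log 2)
      = (1/Real.log 2) * ∫ s in (1/P)..((2:ℝ) ^ R₀ / P), Real.exp (-s) / s := by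
    rw [← intervalIntegral.integral_const_mul]
    apply intervalIntegral.integral_congr
    intro s _
    field_simp
  -- integrability of E₁ integrand
  have hE1int : ∀ a : ℝ, 0 < a →
      IntegrableOn (fun s => Real.exp (-s) / s) (Set.Ioi a) := by
    intro a ha
    have hbase : IntegrableOn (fun x : ℝ => Real.exp (-1 * x) * (1/a)) (Set.Ioi a) :=
      (exp_neg_integrableOn_Ioi a one_pos).mul_const _
    refine Integrable.mono' hbase ?_ ?_
    · exact (((Real.measurable_exp.comp measurable_neg).div
        measurable_id).aestronglyMeasurable)
    · rw [ae_restrict_iff' measurableSet_Ioi]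
      refine Filter.Eventually.of_forall fun s hs => ?_
      simp only [Set.mem_Ioi] at hs
      have hspos : 0 < s := lt_trans ha hs
      rw [Real.norm_eq_abs, abs_of_nonneg (by positivity)]
      rw [neg_one_mul, mul_one_div]
      exact div_le_div_of_nonneg_left (Real.exp_nonneg _) ha hs.le
  have ha_pos : (0:ℝ) < 1/P := by positivity
  have hb_pos : (0:ℝ) < (2:ℝ) ^ R₀ / P := div_pos (Real.rpow_pos_of_pos two_pos R₀) hP
  have hab : (1:ℝ)/P ≤ (2:ℝ) ^ R₀ / P := by gcongr
  have hsplit : (∫ s in Set.Ioi (1/P), Real.exp (-s) / s)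
      = (∫ s in Set.Ioc (1/P) ((2:ℝ) ^ R₀ / P), Real.exp (-s) / s)
        + ∫ s in Set.Ioi ((2:ℝ) ^ R₀ / P), Real.exp (-s) / s := by
    rw [← Set.Ioc_union_Ioi_eq_Ioi hab,
      MeasureTheory.setIntegral_union (Set.Ioc_disjoint_Ioi le_rfl) measurableSet_Ioi
        ((hE1int _ ha_pos).mono_set Set.Ioc_subset_Ioi_self) (hE1int _ hb_pos)]
  have step8 : ∫ s in (1/P)..((2:ℝ) ^ R₀ / P), Real.exp (-s) / s
      = (∫ s in Set.Ioi (1/P), Real.exp (-s) / s)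
        - ∫ s in Set.Ioi ((2:ℝ) ^ R₀ / P), Real.exp (-s) / s := by
    rw [intervalIntegral.integral_of_le hab, hsplit]
    ring
  -- assemble
  rw [partA, ENNReal.toReal_ofReal (Real.exp_nonneg _)]
  have hEfin : ∫ ω, g ω ∂ℙ
      = R₀ - Real.exp (1/P) * ((1/Real.log 2) *
          ((∫ s in Set.Ioi (1/P), Real.exp (-s) / s)
            - ∫ s in Set.Ioi ((2:ℝ) ^ R₀ / P), Real.exp (-s) / s)) := by
    rw [step1, step2, step3, step4, step5, step6, step7, step8]
  rw [hEfin]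
  ring
end

section
/- Let h_b and h_e be independent random variables, exponentially distributed with rates λ_b > 0 and λ_e > 0 respectively (in particular, the eavesdropper may have arbitrarily larger average SNR than the legitimate receiver, i.e., 1/λ_e may exceed 1/λ_b). Then for every transmit power P > 0 and every rate R₀ > 0, the secrecy-rate objective is strictly positive: Pr(R₀ ≤ log₂(1 + h_b P)) · 𝔼[(R₀ − log₂(1 + h_e P))⁺] > 0. -/
open MeasureTheory ProbabilityTheory Real

/-- For independent exponential fading gains `h_b`, `h_e` with arbitrary rates
`λ_b, λ_e > 0` (so the eavesdropper may enjoy an arbitrarily larger average SNR), every power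
`P > 0` and every rate `R₀ > 0`, the secrecy-rate objective is strictly positive:
`Pr(R₀ ≤ log₂(1 + h_b P)) · 𝔼[(R₀ - log₂(1 + h_e P))⁺] > 0`. -/
theorem stmt_9 {Ω : Type*} [MeasureSpace Ω] [IsProbabilityMeasure (ℙ : Measure Ω)]
    (hb he : Ω → ℝ) (hbmeas : Measurable hb) (hemeas : Measurable he)
    (hindep : IndepFun hb he ℙ)
    (lb le : ℝ) (hlb : 0 < lb) (hle : 0 < le)
    (hbexp : ∀ x : ℝ, 0 ≤ x → ℙ {ω | hb ω > x} = ENNReal.ofReal (Real.exp (-(lb * x))))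
    (heexp : ∀ x : ℝ, 0 ≤ x → ℙ {ω | he ω > x} = ENNReal.ofReal (Real.exp (-(le * x))))
    (P R₀ : ℝ) (hP : 0 < P) (hR₀ : 0 < R₀) :
    0 < (ℙ {ω | R₀ ≤ Real.logb 2 (1 + hb ω * P)}).toReal
        * ∫ ω, max (R₀ - Real.logb 2 (1 + he ω * P)) 0 ∂ℙ := by
  have h2 : (1:ℝ) < 2 := one_lt_two
  set x₁ : ℝ := ((2:ℝ) ^ R₀ - 1) / P with hx₁def
  set x₀ : ℝ := ((2:ℝ) ^ (R₀/2) - 1) / P with hx₀def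
  have hx₁pos : 0 < x₁ := div_pos (by
      have : (1:ℝ) < 2 ^ R₀ :=
        (Real.one_lt_rpow_iff_of_pos two_pos).mpr (Or.inl ⟨h2, hR₀⟩)
      linarith) hP
  have hx₀pos : 0 < x₀ := div_pos (by
      have : (1:ℝ) < 2 ^ (R₀/2) :=
        (Real.one_lt_rpow_iff_of_pos two_pos).mpr (Or.inl ⟨h2, by linarith⟩)
      linarith) hP
  -- first factor positive
  have hE : ℙ {ω | hb ω > x₁} ≤ ℙ {ω | R₀ ≤ Real.logb 2 (1 + hb ω * P)} := by
    apply measure_mono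
    intro ω hω
    simp only [Set.mem_setOf_eq] at hω ⊢
    have h1 : (2:ℝ) ^ R₀ ≤ 1 + hb ω * P := by
      have hmul : x₁ * P < hb ω * P := mul_lt_mul_of_pos_right hω hP
      rw [hx₁def, div_mul_cancel₀ _ hP.ne'] at hmul
      linarith
    have hy : (0:ℝ) < 1 + hb ω * P := lt_of_lt_of_le (Real.rpow_pos_of_pos two_pos R₀) h1
    exact (Real.le_logb_iff_rpow_le h2 hy).mpr h1
  have hEpos : 0 < (ℙ {ω | R₀ ≤ Real.logb 2 (1 + hb ω * P)}).toReal := by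
    have h1 : (0:ENNReal) < ℙ {ω | hb ω > x₁} := by
      rw [hbexp x₁ hx₁pos.le]; exact ENNReal.ofReal_pos.mpr (Real.exp_pos _)
    exact ENNReal.toReal_pos (ne_of_gt (lt_of_lt_of_le h1 hE)) (measure_ne_top _ _)
  -- he is a.s. positive
  have hae : ∀ᵐ ω ∂(ℙ : Measure Ω), 0 < he ω := by
    have hm : MeasurableSet {ω | he ω > 0} := measurableSet_lt measurable_const hemeas
    have h1 : ℙ {ω | he ω > 0} = 1 := by
      rw [heexp 0 le_rfl]; simp
    rw [ae_iff]
    have heq : {ω | ¬ 0 < he ω} = {ω | he ω > 0}ᶜ := by ext ω; simp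
    rw [heq, measure_compl hm (measure_ne_top _ _), h1, measure_univ, tsub_self]
  -- measurability and integrability of the integrand
  have hfmeas : Measurable fun ω => max (R₀ - Real.logb 2 (1 + he ω * P)) 0 := by
    apply Measurable.max _ measurable_const
    apply Measurable.sub measurable_const
    unfold Real.logb
    exact (Real.measurable_log.comp (measurable_const.add (hemeas.mul_const P))).div_const _
  have hfint : Integrable (fun ω => max (R₀ - Real.logb 2 (1 + he ω * P)) 0) ℙ := by
    refine Integrable.mono' (integrable_const R₀) hfmeas.aestronglyMeasurable ?_
    filter_upwards [hae] with ω hω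
    have h1 : 0 ≤ Real.logb 2 (1 + he ω * P) :=
      Real.logb_nonneg h2 (by nlinarith)
    rw [Real.norm_eq_abs, abs_of_nonneg (le_max_right _ _)]
    exact max_le (by linarith) hR₀.le
  -- the good event for the eavesdropper
  set A : Set Ω := {ω | 0 < he ω ∧ he ω ≤ x₀} with hAdef
  have hAmeas : MeasurableSet A :=
    (measurableSet_lt measurable_const hemeas).inter (measurableSet_le hemeas measurable_const)
  have hAcompl : ℙ Aᶜ ≤ ENNReal.ofReal (Real.exp (-(le * x₀))) := by
    have hsub : Aᶜ ⊆ {ω | ¬ 0 < he ω} ∪ {ω | he ω > x₀} := by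
      intro ω hω
      simp only [hAdef, Set.mem_compl_iff, Set.mem_setOf_eq] at hω
      rcases lt_or_ge x₀ (he ω) with h | h
      · exact Or.inr h
      · exact Or.inl fun hpos => hω ⟨hpos, h⟩
    calc ℙ Aᶜ ≤ ℙ {ω | ¬ 0 < he ω} + ℙ {ω | he ω > x₀} :=
          le_trans (measure_mono hsub) (measure_union_le _ _)
      _ = ENNReal.ofReal (Real.exp (-(le * x₀))) := by
          rw [ae_iff.mp hae, heexp x₀ hx₀pos.le, zero_add]
  have hApos : 0 < ℙ A := by
    have h1 : ℙ Aᶜ < 1 := lt_of_le_of_lt hAcompl (by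
      rw [← ENNReal.ofReal_one]
      exact ENNReal.ofReal_lt_ofReal_iff (by norm_num) |>.mpr
        (Real.exp_lt_one_iff.mpr (by nlinarith)))
    have h2' : ℙ A = 1 - ℙ Aᶜ := by
      have := prob_compl_eq_one_sub (μ := (ℙ : Measure Ω)) hAmeas.compl
      rwa [compl_compl] at this
    rw [h2']
    exact tsub_pos_of_lt h1
  -- lower bound of the integrand on A
  have hlow : ∀ ω ∈ A, R₀/2 ≤ max (R₀ - Real.logb 2 (1 + he ω * P)) 0 := by
    intro ω hω
    obtain ⟨hpos, hle'⟩ := hω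
    have hy : (0:ℝ) < 1 + he ω * P := by nlinarith
    have h1 : 1 + he ω * P ≤ (2:ℝ) ^ (R₀/2) := by
      have hmul : he ω * P ≤ x₀ * P := mul_le_mul_of_nonneg_right hle' hP.le
      rw [hx₀def, div_mul_cancel₀ _ hP.ne'] at hmul
      linarith
    have h2' : Real.logb 2 (1 + he ω * P) ≤ R₀/2 :=
      (Real.logb_le_iff_le_rpow h2 hy).mpr h1
    exact le_trans (by linarith) (le_max_left _ _)
  have hint : R₀/2 * (ℙ A).toReal ≤ ∫ ω, max (R₀ - Real.logb 2 (1 + he ω * P)) 0 ∂ℙ := by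
    calc R₀/2 * (ℙ A).toReal ≤ ∫ ω in A, max (R₀ - Real.logb 2 (1 + he ω * P)) 0 ∂ℙ :=
          (by
            have := setIntegral_ge_of_const_le hAmeas (measure_ne_top _ _) hlow hfint.integrableOn
            rwa [smul_eq_mul, measureReal_def, mul_comm] at this)
      _ ≤ ∫ ω, max (R₀ - Real.logb 2 (1 + he ω * P)) 0 ∂ℙ :=
          setIntegral_le_integral hfint
            (Filter.Eventually.of_forall fun ω => le_max_right _ _)
  have hI : 0 < ∫ ω, max (R₀ - Real.logb 2 (1 + he ω * P)) 0 ∂ℙ :=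
    lt_of_lt_of_le
      (mul_pos (half_pos hR₀) (ENNReal.toReal_pos hApos.ne' (measure_ne_top _ _))) hint
  exact mul_pos hEpos hI
end

section
/- Fix P > 0 and define f : [0, ∞) → ℝ by f(R₀) = exp(−(2^{R₀} − 1)/P) · { R₀ − (e^{1/P}/ln 2)·( E₁(1/P) − E₁(2^{R₀}/P) ) }. Then f is continuous, f(0) = 0, f(R₀) → 0 as R₀ → ∞, f(R₀) > 0 for some R₀ > 0, and f attains a maximum on [0, ∞); consequently the supremum over R₀ defining the symmetric-scenario secrecy key rate is attained and is strictly positive. -/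
open MeasureTheory Real Filter Set

lemma aux_intOn {a : ℝ} (ha : 0 < a) :
    IntegrableOn (fun s => Real.exp (-s) / s) (Set.Ioi a) := by
  have hmeas : AEStronglyMeasurable (fun s => Real.exp (-s) / s)
      (volume.restrict (Set.Ioi a)) :=
    ((Real.measurable_exp.comp measurable_neg).div measurable_id).aestronglyMeasurable
  refine Integrable.mono' ((exp_neg_integrableOn_Ioi a one_pos).const_mul a⁻¹) hmeas ?_
  filter_upwards [ae_restrict_mem measurableSet_Ioi] with x hx
  have hx0 : 0 < x := ha.trans hx
  rw [Real.norm_eq_abs, abs_of_nonneg (by positivity)]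
  have : Real.exp (-x) / x ≤ Real.exp (-x) / a :=
    div_le_div_of_nonneg_left (Real.exp_pos _).le ha (le_of_lt hx)
  calc Real.exp (-x) / x ≤ Real.exp (-x) / a := this
    _ = a⁻¹ * Real.exp (-1 * x) := by rw [neg_one_mul]; ring

lemma aux_split {a b : ℝ} (ha : 0 < a) (hab : a ≤ b) :
    (∫ s in Set.Ioi a, Real.exp (-s) / s) - ∫ s in Set.Ioi b, Real.exp (-s) / s
      = ∫ s in a..b, Real.exp (-s) / s := by
  have hb : 0 < b := lt_of_lt_of_le ha hab
  have h1 := aux_intOn ha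
  have h2 := aux_intOn hb
  have h3 : IntegrableOn (fun s => Real.exp (-s) / s) (Set.Ioc a b) :=
    h1.mono_set Set.Ioc_subset_Ioi_self
  rw [intervalIntegral.integral_of_le hab]
  have hsplit := MeasureTheory.setIntegral_union (Set.Ioc_disjoint_Ioi le_rfl)
    measurableSet_Ioi h3 h2 (f := fun s => Real.exp (-s) / s)
  rw [Set.Ioc_union_Ioi_eq_Ioi hab] at hsplit
  rw [hsplit]; ring

lemma aux_split' {a b : ℝ} (ha : 0 < a) (hb : 0 < b) :
    (∫ s in Set.Ioi a, Real.exp (-s) / s) - ∫ s in Set.Ioi b, Real.exp (-s) / s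
      = ∫ s in a..b, Real.exp (-s) / s := by
  rcases le_total a b with h | h
  · exact aux_split ha h
  · rw [intervalIntegral.integral_symm, ← aux_split hb h]; ring

lemma aux_hasDeriv {a x : ℝ} (ha : 0 < a) (hx : 0 < x) :
    HasDerivAt (fun u => ∫ s in a..u, Real.exp (-s) / s) (Real.exp (-x) / x) x := by
  apply intervalIntegral.integral_hasDerivAt_right
  · apply ContinuousOn.intervalIntegrable
    have hsub : Set.uIcc a x ⊆ Set.Ioi (0:ℝ) := fun t ht => lt_of_lt_of_le (lt_min ha hx) ht.1
    exact ((Real.continuous_exp.comp continuous_neg).continuousOn).div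
      continuous_id.continuousOn (fun t ht => ne_of_gt (hsub ht))
  · exact ⟨Set.univ, Filter.univ_mem,
      ((Real.measurable_exp.comp measurable_neg).div measurable_id).aestronglyMeasurable⟩
  · exact ((Real.continuous_exp.comp continuous_neg).continuousAt).div
      continuousAt_id (ne_of_gt hx)

lemma aux_two_rpow_deriv (R : ℝ) :
    HasDerivAt (fun u : ℝ => (2:ℝ) ^ u) ((2:ℝ) ^ R * Real.log 2) R :=
  (Real.hasStrictDerivAt_const_rpow (by norm_num) R).hasDerivAt

/-- Fix `P > 0` and let
`f(R₀) = exp (-(2^{R₀}-1)/P) · (R₀ - (e^{1/P}/ln 2)(E₁(1/P) - E₁(2^{R₀}/P)))` on `[0, ∞)`,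
where `E₁(x) = ∫ₓ^∞ e^{-t}/t dt`. Then `f` is continuous, `f 0 = 0`, `f → 0` at infinity,
`f` is positive somewhere, and `f` attains a strictly positive maximum on `[0, ∞)`. -/
theorem stmt_11 (P : ℝ) (hP : 0 < P)
    (f : ℝ → ℝ)
    (hf : f = fun R₀ : ℝ =>
      Real.exp (-(((2 : ℝ) ^ R₀ - 1) / P)) *
        (R₀ - (Real.exp (1 / P) / Real.log 2) *
          ((∫ s in Set.Ioi (1 / P), Real.exp (-s) / s)
            - ∫ s in Set.Ioi ((2 : ℝ) ^ R₀ / P), Real.exp (-s) / s))) :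
    ContinuousOn f (Set.Ici 0) ∧
    f 0 = 0 ∧
    Tendsto f atTop (nhds 0) ∧
    (∃ R₀ > (0 : ℝ), 0 < f R₀) ∧
    ∃ M ∈ Set.Ici (0 : ℝ), (∀ x ∈ Set.Ici (0 : ℝ), f x ≤ f M) ∧ 0 < f M := by
  have haP : (0:ℝ) < 1 / P := by positivity
  have h2pos : ∀ R : ℝ, (0:ℝ) < (2:ℝ) ^ R := fun R => Real.rpow_pos_of_pos (by norm_num) R
  set c : ℝ := Real.exp (1 / P) / Real.log 2 with hc
  have hcpos : 0 < c := div_pos (Real.exp_pos _) (Real.log_pos (by norm_num))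
  set J : ℝ → ℝ := fun R => ∫ s in (1/P)..((2:ℝ) ^ R / P), Real.exp (-s) / s with hJ
  have hfJ : f = fun R => Real.exp (-(((2:ℝ) ^ R - 1) / P)) * (R - c * J R) := by
    rw [hf]; funext R
    rw [aux_split' haP (by positivity)]
  -- derivative of J
  have hJd : ∀ R : ℝ, HasDerivAt J (Real.exp (-((2:ℝ) ^ R / P)) * Real.log 2) R := by
    intro R
    have hx : (0:ℝ) < (2:ℝ) ^ R / P := by positivity
    have hφ : HasDerivAt (fun u : ℝ => (2:ℝ) ^ u / P) ((2:ℝ) ^ R * Real.log 2 / P) R :=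
      (aux_two_rpow_deriv R).div_const P
    have hcomp := (aux_hasDeriv haP hx).comp R hφ
    have : Real.exp (-((2:ℝ) ^ R / P)) / ((2:ℝ) ^ R / P) * ((2:ℝ) ^ R * Real.log 2 / P)
        = Real.exp (-((2:ℝ) ^ R / P)) * Real.log 2 := by
      field_simp
    rwa [this] at hcomp
  have hJcont : Continuous J := by
    refine continuous_iff_continuousAt.2 fun R => (hJd R).continuousAt
  have h2cont : Continuous fun R : ℝ => (2:ℝ) ^ R :=
    continuous_iff_continuousAt.2 fun R => (aux_two_rpow_deriv R).continuousAt
  have hfc : Continuous f := by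
    rw [hfJ]
    exact (Real.continuous_exp.comp
        (((h2cont.sub continuous_const).div_const P).neg)).mul
      (continuous_id.sub (continuous_const.mul hJcont))
  -- f 0 = 0
  have hf0 : f 0 = 0 := by
    rw [hfJ]
    simp [hJ, Real.rpow_zero]
  -- E values
  set E : ℝ → ℝ := fun x => ∫ s in Set.Ioi x, Real.exp (-s) / s with hE
  have hEnonneg : ∀ x : ℝ, 0 < x → 0 ≤ E x := by
    intro x hx
    refine setIntegral_nonneg measurableSet_Ioi fun s hs => ?_
    have : 0 < s := hx.trans hs
    positivity
  have hJsplit : ∀ R : ℝ, J R = E (1/P) - E ((2:ℝ) ^ R / P) := fun R =>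
    (aux_split' haP (by positivity)).symm
  have h2ge : ∀ R : ℝ, 0 ≤ R → (1:ℝ) ≤ (2:ℝ) ^ R := by
    intro R hR
    have := Real.rpow_le_rpow_of_exponent_le (by norm_num : (1:ℝ) ≤ 2) hR
    simpa using this
  have hJnonneg : ∀ R : ℝ, 0 ≤ R → 0 ≤ J R := by
    intro R hR
    have hle : 1/P ≤ (2:ℝ) ^ R / P := by gcongr; exact h2ge R hR
    refine intervalIntegral.integral_nonneg hle fun u hu => ?_
    have : 0 < u := lt_of_lt_of_le haP hu.1
    positivity
  have hJle : ∀ R : ℝ, 0 ≤ R → J R ≤ E (1/P) := by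
    intro R hR
    rw [hJsplit R]
    have := hEnonneg ((2:ℝ) ^ R / P) (by positivity)
    linarith
  -- the norm bound for large R
  have hK : ∀ R : ℝ, 3 ≤ R → ‖f R‖ ≤ Real.exp (-(R / P)) * (R + c * E (1/P)) := by
    intro R hR
    have hR0 : (0:ℝ) ≤ R := by linarith
    rw [hfJ]
    rw [Real.norm_eq_abs, abs_mul, Real.abs_exp]
    have habs : |R - c * J R| ≤ R + c * E (1/P) := by
      have h1 : 0 ≤ c * J R := mul_nonneg hcpos.le (hJnonneg R hR0)
      have h2 : c * J R ≤ c * E (1/P) := mul_le_mul_of_nonneg_left (hJle R hR0) hcpos.le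
      rw [abs_le]
      constructor <;> nlinarith
    have h2R : R + 1 ≤ (2:ℝ) ^ R := by
      have hl2 := Real.log_two_gt_d9
      have he : 1 + R * Real.log 2 / 2 ≤ Real.exp (R * Real.log 2 / 2) := by
        have := Real.add_one_le_exp (R * Real.log 2 / 2); linarith
      have hnn : (0:ℝ) ≤ 1 + R * Real.log 2 / 2 := by nlinarith
      have hsq : (1 + R * Real.log 2 / 2)^2 ≤ (Real.exp (R * Real.log 2 / 2))^2 :=
        pow_le_pow_left₀ hnn he 2
      have hexp2 : (Real.exp (R * Real.log 2 / 2))^2 = (2:ℝ) ^ R := by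
        rw [sq, ← Real.exp_add, Real.rpow_def_of_pos (by norm_num : (0:ℝ) < 2)]
        congr 1; ring
      nlinarith [hsq, hexp2, sq_nonneg (Real.log 2 - 0.6931471803),
        mul_nonneg (mul_nonneg (by linarith : (0:ℝ) ≤ R - 3)
          (by linarith : (0:ℝ) ≤ R)) (sq_nonneg (Real.log 2)),
        mul_nonneg (by linarith : (0:ℝ) ≤ R - 3) (sq_nonneg (Real.log 2)),
        mul_nonneg (by linarith : (0:ℝ) ≤ R) (sq_nonneg (Real.log 2 - 0.6931471803))]
    have hexp : Real.exp (-(((2:ℝ) ^ R - 1)/P)) ≤ Real.exp (-(R/P)) := by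
      apply Real.exp_le_exp.2
      have hd : R / P ≤ ((2:ℝ) ^ R - 1)/P := by gcongr; linarith
      linarith
    have hnn2 : (0:ℝ) ≤ R + c * E (1/P) :=
      add_nonneg hR0 (mul_nonneg hcpos.le (hEnonneg _ haP))
    exact mul_le_mul hexp habs (abs_nonneg _) (Real.exp_pos _).le
  -- tendsto
  have htend : Tendsto f atTop (nhds 0) := by
    have hdiv : Tendsto (fun R : ℝ => R / P) atTop atTop :=
      Tendsto.atTop_div_const hP tendsto_id
    have h1 : Tendsto (fun u : ℝ => u * Real.exp (-u)) atTop (nhds 0) := by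
      have := Real.tendsto_pow_mul_exp_neg_atTop_nhds_zero 1
      simpa using this
    have h2 : Tendsto (fun u : ℝ => Real.exp (-u)) atTop (nhds 0) :=
      Real.tendsto_exp_neg_atTop_nhds_zero
    have h3 := ((h1.comp hdiv).const_mul P).add
      ((h2.comp hdiv).const_mul (c * E (1/P)))
    have hg : Tendsto (fun R : ℝ => Real.exp (-(R/P)) * (R + c * E (1/P)))
        atTop (nhds 0) := by
      have heq : (fun R : ℝ => Real.exp (-(R/P)) * (R + c * E (1/P))) =
          fun R => P * ((R/P) * Real.exp (-(R/P))) + (c * E (1/P)) * Real.exp (-(R/P)) := by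
        funext R; field_simp
      rw [heq]
      simpa [Function.comp] using h3
    exact squeeze_zero_norm' (eventually_atTop.2 ⟨3, hK⟩) hg
  -- strict monotonicity of the bracket
  have hB0 : (0:ℝ) - c * J 0 = 0 := by
    simp [hJ, Real.rpow_zero]
  have hBmono : StrictMonoOn (fun R => R - c * J R) (Set.Ici 0) := by
    apply strictMonoOn_of_deriv_pos (convex_Ici 0)
    · exact (continuous_id.sub (continuous_const.mul hJcont)).continuousOn
    · intro x hx
      rw [interior_Ici] at hx
      have hd : HasDerivAt (fun R => R - c * J R)
          (1 - c * (Real.exp (-((2:ℝ) ^ x / P)) * Real.log 2)) x :=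
        (hasDerivAt_id x).sub ((hJd x).const_mul c)
      rw [hd.deriv]
      have hl : Real.log 2 ≠ 0 := ne_of_gt (Real.log_pos one_lt_two)
      have h1 : c * (Real.exp (-((2:ℝ) ^ x / P)) * Real.log 2)
          = Real.exp (1/P - (2:ℝ) ^ x / P) := by
        rw [hc, Real.exp_sub, Real.exp_neg]
        field_simp
      have h2 : (1:ℝ) < (2:ℝ) ^ x := by
        have := Real.rpow_lt_rpow_of_exponent_lt (by norm_num : (1:ℝ) < 2) hx
        simpa using this
      have h3 : 1/P - (2:ℝ) ^ x / P < 0 := by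
        have : 1/P < (2:ℝ) ^ x / P := by gcongr
        linarith
      have h4 : Real.exp (1/P - (2:ℝ) ^ x / P) < 1 := by
        rw [Real.exp_lt_one_iff]; exact h3
      rw [h1]; linarith
  have hB1 : 0 < 1 - c * J 1 := by
    have h := hBmono Set.self_mem_Ici (by norm_num : (1:ℝ) ∈ Set.Ici (0:ℝ)) one_pos
    simpa [hB0] using h
  have hfpos : 0 < f 1 := by
    rw [hfJ]; exact mul_pos (Real.exp_pos _) hB1
  -- assemble
  refine ⟨hfc.continuousOn, hf0, htend, ⟨1, one_pos, hfpos⟩, ?_⟩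
  have hev : ∀ᶠ R in atTop, f R < f 1 := htend.eventually_lt_const hfpos
  obtain ⟨N, hN⟩ := eventually_atTop.1 hev
  have hN'1 : (1:ℝ) ≤ max N 1 := le_max_right N 1
  obtain ⟨M, hM, hMmax⟩ := isCompact_Icc.exists_isMaxOn
    (Set.nonempty_Icc.2 (by linarith : (0:ℝ) ≤ max N 1)) hfc.continuousOn
  have h1mem : (1:ℝ) ∈ Set.Icc (0:ℝ) (max N 1) := Set.mem_Icc.2 ⟨by norm_num, hN'1⟩
  have hfM1 : f 1 ≤ f M := hMmax h1mem
  refine ⟨M, hM.1, ?_, by linarith⟩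
  intro x hx
  rcases le_total x (max N 1) with h | h
  · exact hMmax (Set.mem_Icc.2 ⟨hx, h⟩)
  · have h1 : f x < f 1 := hN x (le_trans (le_max_left N 1) h)
    linarith
end

section
/- Fix k ≥ 1 and P > 0, and define the key rate R_k(R₀) = (R₀/k)·exp(−(2^{R₀} − 1)/P) for R₀ ≥ 0. Then R_k has a unique global maximizer R₀* ∈ (0, ∞), characterized as the unique positive solution of R₀· 2^{R₀} · ln 2 = P; moreover R_k is strictly increasing on [0, R₀*] and strictly decreasing on [R₀*, ∞). -/
open Real

private lemma g_strictMono : StrictMonoOn (fun x : ℝ => x * (2 : ℝ) ^ x * Real.log 2)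
    (Set.Ici 0) := by
  intro a ha b hb hab
  have h2 : (0:ℝ) < Real.log 2 := Real.log_pos (by norm_num)
  have hpow : (2:ℝ) ^ a < (2:ℝ) ^ b := (Real.rpow_lt_rpow_left_iff (by norm_num)).2 hab
  have : a * (2:ℝ) ^ a < b * (2:ℝ) ^ b :=
    calc a * (2:ℝ) ^ a ≤ a * (2:ℝ) ^ b := mul_le_mul_of_nonneg_left hpow.le ha
      _ < b * (2:ℝ) ^ b := mul_lt_mul_of_pos_right hab (Real.rpow_pos_of_pos (by norm_num) b)
  exact mul_lt_mul_of_pos_right this h2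

private lemma hasDerivAt_Rk (k : ℕ) (P : ℝ) (x : ℝ) :
    HasDerivAt (fun R₀ : ℝ => (R₀ / (k : ℝ)) * Real.exp (-(((2 : ℝ) ^ R₀ - 1) / P)))
      (Real.exp (-(((2 : ℝ) ^ x - 1) / P)) *
        (1 / k - x / k * ((2:ℝ) ^ x * Real.log 2 / P))) x := by
  have h1 : HasDerivAt (fun R₀ : ℝ => R₀ / (k : ℝ)) (1 / k) x := by
    simpa [div_eq_mul_inv] using (hasDerivAt_id x).mul_const ((k:ℝ)⁻¹)
  have h2 : HasDerivAt (fun R₀ : ℝ => (2:ℝ) ^ R₀) ((2:ℝ) ^ x * Real.log 2) x :=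
    (Real.hasStrictDerivAt_const_rpow (by norm_num) x).hasDerivAt
  have h3 : HasDerivAt (fun R₀ : ℝ => -(((2 : ℝ) ^ R₀ - 1) / P))
      (-((2:ℝ) ^ x * Real.log 2 / P)) x := by
    exact ((h2.sub_const 1).div_const P).neg
  have := h1.mul h3.exp
  convert this using 1
  all_goals first | rfl | ring

/-- Fix `k ≥ 1` and `P > 0` and let `R_k(R₀) = (R₀/k) · exp (-(2^{R₀}-1)/P)`.
Then `R_k` has a unique global maximizer `R₀* ∈ (0, ∞)`, characterized as the unique positive
solution of `R₀ · 2^{R₀} · ln 2 = P`; moreover `R_k` is strictly increasing on `[0, R₀*]` and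
strictly decreasing on `[R₀*, ∞)`. -/
theorem stmt_13 (k : ℕ) (hk : 1 ≤ k) (P : ℝ) (hP : 0 < P)
    (Rk : ℝ → ℝ)
    (hRk : Rk = fun R₀ : ℝ =>
      (R₀ / (k : ℝ)) * Real.exp (-(((2 : ℝ) ^ R₀ - 1) / P))) :
    ∃ R₀star : ℝ, 0 < R₀star ∧
      R₀star * (2 : ℝ) ^ R₀star * Real.log 2 = P ∧
      (∀ x : ℝ, 0 < x → x * (2 : ℝ) ^ x * Real.log 2 = P → x = R₀star) ∧
      StrictMonoOn Rk (Set.Icc 0 R₀star) ∧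
      StrictAntiOn Rk (Set.Ici R₀star) ∧
      (∀ x ∈ Set.Ici (0 : ℝ), Rk x ≤ Rk R₀star) ∧
      (∀ x ∈ Set.Ici (0 : ℝ), x ≠ R₀star → Rk x < Rk R₀star) := by
  have hk0 : (0:ℝ) < k := by exact_mod_cast hk
  have hlog2 : (0:ℝ) < Real.log 2 := Real.log_pos (by norm_num)
  set g : ℝ → ℝ := fun x => x * (2:ℝ) ^ x * Real.log 2 with hg
  have hcont : Continuous g := by
    have h2x : Continuous fun x : ℝ => (2:ℝ) ^ x :=
      (Real.continuous_exp.comp (continuous_const.mul continuous_id)).congr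
        (fun x => (Real.rpow_def_of_pos (by norm_num : (0:ℝ) < 2) x).symm)
    exact (continuous_id.mul h2x).mul continuous_const
  set M : ℝ := max 1 (P / Real.log 2) with hM
  have hM1 : (1:ℝ) ≤ M := le_max_left _ _
  have hgM : P ≤ g M := by
    have h2M : (1:ℝ) ≤ (2:ℝ) ^ M := Real.one_le_rpow (by norm_num) (by linarith)
    have : P / Real.log 2 * Real.log 2 ≤ M * (2:ℝ)^M * Real.log 2 := by
      have hM2 : P / Real.log 2 ≤ M := le_max_right _ _
      have : P / Real.log 2 ≤ M * (2:ℝ)^M := le_trans hM2 (by nlinarith)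
      exact mul_le_mul_of_nonneg_right this hlog2.le
    simpa [div_mul_cancel₀, hlog2.ne'] using this
  obtain ⟨R, hRmem, hRP⟩ : ∃ R ∈ Set.Icc (0:ℝ) M, g R = P := by
    have := intermediate_value_Icc (by linarith : (0:ℝ) ≤ M) hcont.continuousOn
    have hmem : P ∈ Set.Icc (g 0) (g M) := by
      constructor
      · simp [hg, hP.le]
      · exact hgM
    obtain ⟨R, hR, hR'⟩ := this hmem
    exact ⟨R, hR, hR'⟩
  have hRpos : 0 < R := by
    rcases hRmem.1.lt_or_eq with h | h
    · exact h
    · exfalso; rw [← h] at hRP; simp [hg] at hRP; linarith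
  have huniq : ∀ x : ℝ, 0 < x → g x = P → x = R := by
    intro x hx hxP
    apply g_strictMono.injOn hx.le hRpos.le
    show g x = g R
    rw [hxP, hRP]
  -- derivative sign analysis
  have hderiv : ∀ x : ℝ, HasDerivAt Rk
      (Real.exp (-(((2 : ℝ) ^ x - 1) / P)) * (1 / k - x / k * ((2:ℝ) ^ x * Real.log 2 / P))) x := by
    intro x; rw [hRk]; exact hasDerivAt_Rk k P x
  have hsign : ∀ x : ℝ, 0 ≤ x →
      (Real.exp (-(((2 : ℝ) ^ x - 1) / P)) * (1 / k - x / k * ((2:ℝ) ^ x * Real.log 2 / P)))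
        = Real.exp (-(((2 : ℝ) ^ x - 1) / P)) / (k * P) * (P - g x) := by
    intro x _
    have h : 1 / (k:ℝ) - x / k * ((2:ℝ) ^ x * Real.log 2 / P)
        = (P - g x) / ((k:ℝ) * P) := by
      rw [hg]
      field_simp
    rw [h, hg]
    ring
  have hpos : ∀ x ∈ Set.Ioo (0:ℝ) R, 0 < deriv Rk x := by
    intro x hx
    rw [(hderiv x).deriv, hsign x hx.1.le]
    have h1 : g x < P := by rw [← hRP]; exact g_strictMono hx.1.le hRpos.le hx.2
    have h2 : 0 < Real.exp (-(((2 : ℝ) ^ x - 1) / P)) / (k * P) := by positivity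
    exact mul_pos h2 (by linarith)
  have hneg : ∀ x ∈ Set.Ioi R, deriv Rk x < 0 := by
    intro x hx
    rw [(hderiv x).deriv, hsign x (le_trans hRpos.le (le_of_lt hx))]
    have h1 : P < g x := by rw [← hRP]; exact g_strictMono hRpos.le (le_trans hRpos.le hx.le) hx
    have h2 : 0 < Real.exp (-(((2 : ℝ) ^ x - 1) / P)) / (k * P) := by positivity
    nlinarith
  have hdiff : Differentiable ℝ Rk := fun x => (hderiv x).differentiableAt
  have hRkCont : Continuous Rk := hdiff.continuous
  have hmono : StrictMonoOn Rk (Set.Icc 0 R) := by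
    apply strictMonoOn_of_deriv_pos (convex_Icc 0 R) hRkCont.continuousOn
    intro x hx
    rw [interior_Icc] at hx
    exact hpos x hx
  have hanti : StrictAntiOn Rk (Set.Ici R) := by
    apply strictAntiOn_of_deriv_neg (convex_Ici R) hRkCont.continuousOn
    intro x hx
    rw [interior_Ici] at hx
    exact hneg x hx
  refine ⟨R, hRpos, hRP, huniq, hmono, hanti, ?_, ?_⟩
  · intro x hx
    rcases lt_trichotomy x R with h | h | h
    · exact (hmono ⟨hx, h.le⟩ ⟨hRpos.le, le_rfl⟩ h).le
    · exact h ▸ le_rfl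
    · exact (hanti (Set.mem_Ici.2 le_rfl) h.le h).le
  · intro x hx hne
    rcases lt_or_gt_of_ne hne with h | h
    · exact hmono ⟨hx, h.le⟩ ⟨hRpos.le, le_rfl⟩ h
    · exact hanti (Set.mem_Ici.2 le_rfl) h.le h
end
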